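/- For integers n, m with m ≥ 1 and n − m ≥ 2 and every Y ∈ ℝ^{n×m}, the marginal of the singular value shrinkage prior is finite and strictly positive: 0 < ∫_{ℝ^{n×m}} (2π)^{−nm/2} exp(−½‖Y − M‖_F²) det(MᵀM)^{−(n−m−1)/2} dM < ∞, where the integrand is interpreted as 0 on the (Lebesgue-null) set where MᵀM is singular. -/

import Mathlib

open Matrix MeasureTheory ENNReal
open scoped Classical

open Module

/-- The matrix in `ℝ^{n×m}` corresponding to a point of `ℝ^{nm}`
(the identification via entries). -/
def toMat {n m : ℕ} (x : EuclideanSpace ℝ (Fin n × Fin m)) : Matrix (Fin n) (Fin m) ℝ :=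
  fun i a => x (i, a)

/-- `det(MᵀM)^{-(n-m-1)/2}` when `MᵀM` is invertible, interpreted as `0` on the
(Lebesgue-null) set where `MᵀM` is singular. -/
noncomputable def svsDensity (n m : ℕ) (x : EuclideanSpace ℝ (Fin n × Fin m)) : ℝ :=
  if IsUnit ((toMat x)ᵀ * toMat x).det then
    (((toMat x)ᵀ * toMat x).det) ^ (-(((n : ℝ) - m - 1)) / 2)
  else 0

noncomputable section

namespace SVS

variable {n : ℕ}

abbrev E (n : ℕ) := EuclideanSpace ℝ (Fin n)

/-- Gram matrix of a finite family of vectors. -/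
def gram {k : ℕ} (f : Fin k → E n) : Matrix (Fin k) (Fin k) ℝ :=
  Matrix.of fun i j => inner ℝ (f i) (f j)

lemma gram_apply {k : ℕ} (f : Fin k → E n) (i j : Fin k) :
    gram f i j = inner ℝ (f i) (f j) := rfl

/-- Key identity: appending a vector multiplies the Gram determinant by the squared
distance to the span. -/
lemma det_gram_cons {k : ℕ} (f : Fin k → E n) (v : E n) :
    (gram (Fin.cons v f)).det
      = ‖v - (Submodule.orthogonalProjectionOnto (Submodule.span ℝ (Set.range f)) v : E n)‖ ^ 2
        * (gram f).det := by
  set V := Submodule.span ℝ (Set.range f) with hV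
  set u : E n := (Submodule.orthogonalProjectionOnto V v : E n) with hu
  set w : E n := v - u with hww
  have huV : u ∈ V := SetLike.coe_mem _
  have hwV : w ∈ Vᗮ := Submodule.sub_starProjection_mem_orthogonal v
  have hfV : ∀ j, f j ∈ V := fun j => Submodule.subset_span (Set.mem_range_self j)
  have hwf : ∀ j, (inner ℝ w (f j) : ℝ) = 0 := fun j =>
    (Submodule.mem_orthogonal' V w).mp hwV (f j) (hfV j)
  have hwu : (inner ℝ w u : ℝ) = 0 := (Submodule.mem_orthogonal' V w).mp hwV u huV
  have huw : (inner ℝ u w : ℝ) = 0 := by rw [real_inner_comm]; exact hwu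
  have hfw : ∀ p, (inner ℝ (f p) w : ℝ) = 0 := fun p => by rw [real_inner_comm]; exact hwf p
  obtain ⟨c, hc⟩ := (Submodule.mem_span_range_iff_exists_fun (R := ℝ)).mp huV
  set G : Matrix (Fin (k + 1)) (Fin (k + 1)) ℝ := gram (Fin.cons u f) with hG
  have hvdec : v = u + w := by simp [hww]
  -- det G = 0
  have hrow : G 0 = ∑ j : Fin (k + 1), (Fin.cons (0 : ℝ) c : Fin (k+1) → ℝ) j • G j := by
    funext q
    set z : E n := (Fin.cons u f : Fin (k+1) → E n) q with hz
    have h0 : G 0 q = (inner ℝ u z : ℝ) := by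
      rw [hG, gram_apply]; rfl
    have hR : ∀ i : Fin k, G i.succ q = (inner ℝ (f i) z : ℝ) := by
      intro i; rw [hG, gram_apply, Fin.cons_succ, hz]
    rw [h0]
    conv_lhs => rw [← hc]
    rw [sum_inner, Fin.sum_univ_succ]
    simp only [Fin.cons_zero, Fin.cons_succ, zero_smul, zero_add, Finset.sum_apply,
      Pi.smul_apply, smul_eq_mul]
    refine Finset.sum_congr rfl fun i _ => ?_
    rw [real_inner_smul_left, hR i]
  have hdetG : G.det = 0 := by
    calc G.det
        = (G.updateRow 0 (∑ j : Fin (k+1), (Fin.cons (0:ℝ) c : Fin (k+1) → ℝ) j • G j)).det := by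
          rw [← hrow, Matrix.updateRow_eq_self]
      _ = (Fin.cons (0:ℝ) c : Fin (k+1) → ℝ) 0 • G.det := Matrix.det_updateRow_sum G 0 _
      _ = 0 := by simp
  -- gram (cons v f) = updateCol G 0 (G · 0 + single 0 ‖w‖²)
  have hGv0 : ∀ i, gram (Fin.cons v f) i 0
      = G i 0 + (Pi.single (0 : Fin (k+1)) (‖w‖ ^ 2) : Fin (k+1) → ℝ) i := by
    intro i
    refine Fin.cases ?_ (fun p => ?_) i
    · rw [hG, gram_apply, gram_apply]
      simp only [Fin.cons_zero, Pi.single_eq_same]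
      rw [hvdec, inner_add_add_self, hwu, huw, real_inner_self_eq_norm_sq,
        real_inner_self_eq_norm_sq]
      ring
    · rw [hG, gram_apply, gram_apply]
      simp only [Fin.cons_succ, Fin.cons_zero]
      rw [Pi.single_eq_of_ne (Fin.succ_ne_zero p), add_zero, hvdec, inner_add_right,
        hfw, add_zero]
  have hGvs : ∀ i (q : Fin k), gram (Fin.cons v f) i q.succ = G i q.succ := by
    intro i q
    refine Fin.cases ?_ (fun p => ?_) i
    · rw [hG, gram_apply, gram_apply]
      simp only [Fin.cons_zero, Fin.cons_succ]
      rw [hvdec, inner_add_left, hwf, add_zero]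
    · rw [hG, gram_apply, gram_apply]
      simp only [Fin.cons_succ]
  have hupd : gram (Fin.cons v f)
      = G.updateCol 0 ((fun i => G i 0) + Pi.single 0 (‖w‖ ^ 2)) := by
    ext i j
    refine Fin.cases ?_ (fun q => ?_) j
    · rw [Matrix.updateCol_apply]
      simp only [if_pos rfl, Pi.add_apply]
      exact hGv0 i
    · rw [Matrix.updateCol_apply]
      simp only [Fin.succ_ne_zero q, if_false]
      exact hGvs i q
  -- compute the determinant
  have hsingle : (G.updateCol 0 (Pi.single 0 (‖w‖ ^ 2))).det = ‖w‖ ^ 2 * (gram f).det := by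
    rw [Matrix.det_succ_column _ 0]
    rw [Finset.sum_eq_single 0]
    · have hsub : (G.updateCol 0 (Pi.single 0 (‖w‖^2))).submatrix
          (Fin.succAbove 0) (Fin.succAbove 0) = gram f := by
        ext p q
        simp only [Matrix.submatrix_apply, Fin.succAbove_zero]
        rw [Matrix.updateCol_apply, if_neg (Fin.succ_ne_zero q)]
        simp [hG, gram_apply]
      rw [hsub]
      simp [Matrix.updateCol_apply]
    · intro i _ hi
      rw [Matrix.updateCol_apply, if_pos rfl, Pi.single_eq_of_ne hi]
      ring
    · simp
  rw [hupd]
  rw [Matrix.det_updateCol_add]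
  rw [Matrix.updateCol_eq_self, hdetG, zero_add, hsingle]

/-- Gram determinants are nonnegative. -/
lemma det_gram_nonneg {k : ℕ} (f : Fin k → E n) : 0 ≤ (gram f).det := by
  induction k with
  | zero => simp [Matrix.det_fin_zero]
  | succ k ih =>
      have := det_gram_cons (Fin.tail f) (f 0)
      rw [Fin.cons_self_tail f] at this
      rw [this]
      exact mul_nonneg (sq_nonneg _) (ih _)


theorem lintegral_pi_prod {k : ℕ} (f : Fin k → ℝ → ℝ≥0∞) (hf : ∀ i, Measurable (f i)) :
    ∫⁻ x : Fin k → ℝ, ∏ i, f i (x i) = ∏ i, ∫⁻ t, f i t := by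
  induction k with
  | zero =>
      simp only [Finset.univ_eq_empty, Finset.prod_empty]
      rw [lintegral_one, volume_pi, Measure.pi_empty_univ]
  | succ k ih =>
      have h := ((measurePreserving_piFinSuccAbove
          (fun _ : Fin (k+1) => (volume : Measure ℝ)) 0).symm).lintegral_comp_emb
          ((MeasurableEquiv.piFinSuccAbove (fun _ => ℝ) 0).symm.measurableEmbedding)
          (fun x => ∏ i, f i (x i))
      rw [volume_pi, ← h]
      simp_rw [MeasurableEquiv.piFinSuccAbove_symm_apply, Fin.insertNthEquiv,
        Fin.insertNth_zero, Equiv.coe_fn_mk, Fin.prod_univ_succ, Fin.cons_zero, Fin.cons_succ]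
      simp only [Fin.zero_succAbove, cast_eq]
      have h2 : Measurable fun y : Fin k → ℝ => ∏ x : Fin k, f x.succ (y x) :=
        Finset.measurable_prod Finset.univ fun i _ =>
          (hf i.succ).comp (measurable_pi_apply i)
      rw [lintegral_prod_mul (hf 0).aemeasurable h2.aemeasurable]
      rw [← volume_pi, ih (fun i => f i.succ) (fun i => hf i.succ)]

/-- One-dimensional bounds -/
def Bplain : ℝ≥0∞ := ∫⁻ t : ℝ, ENNReal.ofReal (Real.exp (-t^2/2))

lemma Bplain_ne_top : Bplain ≠ ⊤ := by
  have h : Integrable (fun t : ℝ => Real.exp (-t^2/2)) := by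
    have h0 := integrable_exp_neg_mul_sq (by norm_num : (0:ℝ) < 1/2)
    refine h0.congr (ae_of_all _ fun x => ?_)
    ring_nf
  exact h.lintegral_lt_top.ne

lemma lintegral_exp_shift (c : ℝ) :
    ∫⁻ t : ℝ, ENNReal.ofReal (Real.exp (-(c - t)^2/2)) = Bplain := by
  have h := lintegral_add_right_eq_self (μ := (volume : Measure ℝ))
    (fun t : ℝ => ENNReal.ofReal (Real.exp (-t^2/2))) (-c)
  calc ∫⁻ t : ℝ, ENNReal.ofReal (Real.exp (-(c - t)^2/2))
      = ∫⁻ t : ℝ, ENNReal.ofReal (Real.exp (-(t + -c)^2/2)) := by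
        refine lintegral_congr fun t => ?_
        rw [show -(c - t)^2/2 = -(t + -c)^2/2 by ring]
    _ = Bplain := h

def Jsing (q : ℝ) : ℝ≥0∞ := ∫⁻ t in Set.Icc (0:ℝ) 1, ENNReal.ofReal t ^ (-q)

lemma Jsing_ne_top {q : ℝ} (hq0 : 0 < q) (hq1 : q < 1) : Jsing q ≠ ⊤ := by
  have h1 : Jsing q = ∫⁻ t in Set.Ioc (0:ℝ) 1, ENNReal.ofReal t ^ (-q) := by
    unfold Jsing
    rw [Measure.restrict_congr_set Ioc_ae_eq_Icc]
  have h2 : ∫⁻ t in Set.Ioc (0:ℝ) 1, ENNReal.ofReal t ^ (-q)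
      = ∫⁻ t in Set.Ioc (0:ℝ) 1, ENNReal.ofReal (t ^ (-q)) := by
    refine setLIntegral_congr_fun measurableSet_Ioc (fun t ht => ?_)
    exact ENNReal.ofReal_rpow_of_pos ht.1
  have h3 : IntegrableOn (fun t : ℝ => t ^ (-q)) (Set.Ioc (0:ℝ) 1) := by
    have := intervalIntegral.intervalIntegrable_rpow' (a := 0) (b := 1)
      (show (-1:ℝ) < -q by linarith)
    simpa [intervalIntegrable_iff, Set.uIoc_of_le (zero_le_one (α := ℝ))] using this
  rw [h1, h2]
  exact h3.lintegral_lt_top.ne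



lemma oneD_sing_bound {q : ℝ} (hq0 : 0 < q) (hq1 : q < 1) (c0 : ℝ) :
    ∫⁻ t : ℝ, ENNReal.ofReal (Real.exp (-(c0 - t)^2/2)) * ENNReal.ofReal |t| ^ (-q)
      ≤ Jsing q + Jsing q + Bplain := by
  set g0 : ℝ → ℝ≥0∞ := (Set.Icc (0:ℝ) 1).indicator (fun u => ENNReal.ofReal u ^ (-q))
    with hg0
  have hg0meas : Measurable g0 := by
    refine Measurable.indicator ?_ measurableSet_Icc
    fun_prop
  have hpt : ∀ t : ℝ, ENNReal.ofReal (Real.exp (-(c0 - t)^2/2)) * ENNReal.ofReal |t| ^ (-q)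
      ≤ g0 t + g0 (-t) + ENNReal.ofReal (Real.exp (-(c0 - t)^2/2)) := by
    intro t
    by_cases habs : |t| ≤ 1
    · have hexp1 : ENNReal.ofReal (Real.exp (-(c0 - t)^2/2)) ≤ 1 := by
        rw [show (1:ℝ≥0∞) = ENNReal.ofReal 1 from ENNReal.ofReal_one.symm]
        refine ENNReal.ofReal_le_ofReal (Real.exp_le_one_iff.mpr ?_)
        nlinarith [sq_nonneg (c0 - t)]
      have hmid : ENNReal.ofReal |t| ^ (-q) ≤ g0 t + g0 (-t) := by
        rcases le_or_gt 0 t with ht | ht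
        · have hmem : t ∈ Set.Icc (0:ℝ) 1 := ⟨ht, by rwa [abs_of_nonneg ht] at habs⟩
          have : g0 t = ENNReal.ofReal |t| ^ (-q) := by
            rw [hg0, Set.indicator_of_mem hmem, abs_of_nonneg ht]
          rw [← this]; exact le_self_add
        · have hmem : -t ∈ Set.Icc (0:ℝ) 1 := by
            constructor <;> [linarith; rwa [abs_of_neg ht] at habs]
          have : g0 (-t) = ENNReal.ofReal |t| ^ (-q) := by
            rw [hg0, Set.indicator_of_mem hmem, abs_of_neg ht]
          rw [← this]; exact le_add_self
      calc ENNReal.ofReal (Real.exp (-(c0 - t)^2/2)) * ENNReal.ofReal |t| ^ (-q)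
          ≤ 1 * ENNReal.ofReal |t| ^ (-q) := mul_le_mul_left hexp1 _
        _ = ENNReal.ofReal |t| ^ (-q) := one_mul _
        _ ≤ g0 t + g0 (-t) := hmid
        _ ≤ _ := le_self_add
    · push_neg at habs
      have h1 : ENNReal.ofReal |t| ^ (-q) ≤ 1 := by
        rw [ENNReal.rpow_neg]
        refine ENNReal.inv_le_one.mpr ?_
        calc (1:ℝ≥0∞) = 1 ^ q := (ENNReal.one_rpow q).symm
          _ ≤ ENNReal.ofReal |t| ^ q :=
            ENNReal.rpow_le_rpow (ENNReal.one_le_ofReal.mpr habs.le) hq0.le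
      calc ENNReal.ofReal (Real.exp (-(c0 - t)^2/2)) * ENNReal.ofReal |t| ^ (-q)
          ≤ ENNReal.ofReal (Real.exp (-(c0 - t)^2/2)) * 1 := mul_le_mul_right h1 _
        _ = ENNReal.ofReal (Real.exp (-(c0 - t)^2/2)) := mul_one _
        _ ≤ _ := le_add_self
  calc ∫⁻ t : ℝ, ENNReal.ofReal (Real.exp (-(c0 - t)^2/2)) * ENNReal.ofReal |t| ^ (-q)
      ≤ ∫⁻ t : ℝ, (g0 t + g0 (-t) + ENNReal.ofReal (Real.exp (-(c0 - t)^2/2))) :=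
        lintegral_mono hpt
    _ = (∫⁻ t, (g0 t + g0 (-t))) + ∫⁻ t, ENNReal.ofReal (Real.exp (-(c0 - t)^2/2)) :=
        lintegral_add_left (hg0meas.add (hg0meas.comp measurable_neg)) _
    _ = (∫⁻ t, g0 t) + (∫⁻ t, g0 (-t)) + Bplain := by
        rw [lintegral_add_left hg0meas, lintegral_exp_shift]
    _ = Jsing q + Jsing q + Bplain := by
        have hneg : ∫⁻ t : ℝ, g0 (-t) = ∫⁻ t, g0 t :=
          (Measure.measurePreserving_neg (volume : Measure ℝ)).lintegral_comp_emb
            (MeasurableEquiv.neg ℝ).measurableEmbedding g0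
        have hJ : ∫⁻ t, g0 t = Jsing q := by
          rw [hg0, lintegral_indicator measurableSet_Icc]; rfl
        rw [hneg, hJ]



/-- The uniform Gaussian–distance bound (Lemma A). -/
theorem lemA (n m : ℕ) (hm : 1 ≤ m) (hnm : m + 2 ≤ n) :
    ∃ C : ℝ≥0∞, C ≠ ⊤ ∧ ∀ (V : Submodule ℝ (E n)), finrank ℝ V ≤ m - 1 → ∀ c : E n,
      ∫⁻ v : E n, ENNReal.ofReal (Real.exp (-‖c - v‖^2/2)) *
        (if v ∈ V then 0
         else ENNReal.ofReal
           (‖v - (Submodule.orthogonalProjectionOnto V v : E n)‖ ^ (-((n:ℝ) - m - 1)))) ≤ C := by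
  classical
  set N : ℕ := n - m + 1 with hN
  set β : ℝ := (n:ℝ) - m - 1 with hβ
  have hmn : m ≤ n := by omega
  have hNR : (N:ℝ) = β + 2 := by
    rw [hN, hβ]; push_cast [Nat.cast_sub hmn]; ring
  have hβ1 : 1 ≤ β := by
    rw [hβ]
    have : (m:ℝ) + 2 ≤ n := by exact_mod_cast hnm
    linarith
  set q : ℝ := β / (β + 2) with hq
  have hq0 : 0 < q := div_pos (by linarith) (by linarith)
  have hq1 : q < 1 := by
    rw [hq, div_lt_one (by linarith)]; linarith
  have hqN : q * N = β := by
    rw [hNR, hq]; field_simp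
  set K : ℝ≥0∞ := Jsing q + Jsing q + Bplain with hK
  have hKtop : K ≠ ⊤ := by
    rw [hK]
    exact ENNReal.add_ne_top.mpr ⟨ENNReal.add_ne_top.mpr
      ⟨Jsing_ne_top hq0 hq1, Jsing_ne_top hq0 hq1⟩, Bplain_ne_top⟩
  refine ⟨K ^ n, by simp [ENNReal.pow_ne_top hKtop], ?_⟩
  intro V hd c
  set d : ℕ := finrank ℝ V with hdd
  have hdn : d + N ≤ n := by
    have := hd
    omega
  -- build an adapted orthonormal basis
  set sB := stdOrthonormalBasis ℝ V with hsB
  set vm : Fin n → E n := fun i => if h : (i : ℕ) < d then (sB ⟨(i:ℕ), h⟩ : E n) else 0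
    with hvm
  set s : Set (Fin n) := {i | (i:ℕ) < d} with hs
  have hON : Orthonormal ℝ (s.restrict vm) := by
    rw [orthonormal_iff_ite]
    rintro ⟨i, hi⟩ ⟨j, hj⟩
    have hi' : (i:ℕ) < d := hi
    have hj' : (j:ℕ) < d := hj
    simp only [Set.restrict_apply, hvm, dif_pos hi', dif_pos hj']
    have h0 := (orthonormal_iff_ite.mp sB.orthonormal) ⟨(i:ℕ), hi'⟩ ⟨(j:ℕ), hj'⟩
    have h1 : (inner ℝ ((sB ⟨(i:ℕ), hi'⟩ : V) : E n) ((sB ⟨(j:ℕ), hj'⟩ : V) : E n) : ℝ)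
        = inner ℝ (sB ⟨(i:ℕ), hi'⟩) (sB ⟨(j:ℕ), hj'⟩) := rfl
    change (inner ℝ (if h : (i:ℕ) < d then (sB ⟨(i:ℕ), h⟩ : E n) else 0)
      (if h : (j:ℕ) < d then (sB ⟨(j:ℕ), h⟩ : E n) else 0) : ℝ) = _
    rw [dif_pos hi', dif_pos hj']
    rw [h1, h0]
    congr 1
    simp only [eq_iff_iff, Fin.mk.injEq, Subtype.mk.injEq]
    constructor
    · intro h; exact Fin.ext h
    · intro h; exact congrArg Fin.val h
  have hcard : finrank ℝ (E n) = Fintype.card (Fin n) := by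
    simp [finrank_euclideanSpace_fin]
  obtain ⟨b, hb⟩ := hON.exists_orthonormalBasis_extension_of_card_eq hcard
  have hbmem : ∀ i : Fin n, (i:ℕ) < d → b i ∈ V := by
    intro i hi
    rw [hb i hi]
    simp only [hvm, dif_pos hi]
    exact SetLike.coe_mem _
  -- span fact
  have hVspan : V = Submodule.span ℝ (Set.range fun j : Fin d => (sB j : E n)) := by
    refine le_antisymm ?_ (Submodule.span_le.mpr ?_)
    · intro x hx
      have hrep := sB.sum_repr ⟨x, hx⟩
      have : x = ∑ j : Fin d, sB.repr ⟨x, hx⟩ j • (sB j : E n) := by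
        conv_lhs => rw [show x = ((⟨x, hx⟩ : V) : E n) from rfl, ← hrep]
        push_cast
        rfl
      rw [this]
      exact Submodule.sum_mem _ fun j _ => Submodule.smul_mem _ _
        (Submodule.subset_span (Set.mem_range_self j))
    · rintro y ⟨j, rfl⟩
      exact SetLike.coe_mem _
  have hborth : ∀ i : Fin n, d ≤ (i:ℕ) → b i ∈ Vᗮ := by
    intro i hi
    rw [Submodule.mem_orthogonal]
    intro u hu
    rw [hVspan] at hu
    induction hu using Submodule.span_induction with
    | mem x hx =>
        obtain ⟨j, rfl⟩ := hx
        have hjd : (j:ℕ) < d := j.isLt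
        have hjn : (j:ℕ) < n := lt_of_lt_of_le (lt_of_lt_of_le hjd (by omega)) le_rfl
        have hx' : (sB j : E n) = b ⟨(j:ℕ), hjn⟩ := by
          rw [hb ⟨(j:ℕ), hjn⟩ hjd]
          simp only [hvm, dif_pos hjd]
          rfl
        have hne : (⟨(j:ℕ), hjn⟩ : Fin n) ≠ i := by
          intro h
          have : (j:ℕ) = (i:ℕ) := congrArg Fin.val h
          omega
        have horth := (orthonormal_iff_ite.mp b.orthonormal ⟨(j:ℕ), hjn⟩ i).trans (if_neg hne)
        rw [← hx'] at horth
        exact horth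
    | zero => exact inner_zero_left _
    | add x y _ _ hx hy => rw [inner_add_left, hx, hy, add_zero]
    | smul a x _ hx => rw [real_inner_smul_left, hx, mul_zero]
  -- special finset of coordinates
  set Semb : Fin N → Fin n := fun j => ⟨d + (j:ℕ), by omega⟩ with hSemb
  have hSembInj : Function.Injective Semb := by
    intro a b' h
    have := congrArg Fin.val h
    simp only [hSemb] at this
    exact Fin.ext (by omega)
  set S : Finset (Fin n) := Finset.image Semb Finset.univ with hS
  have hScard : S.card = N := by
    rw [hS, Finset.card_image_of_injective _ hSembInj, Finset.card_univ, Fintype.card_fin]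
  have hSd : ∀ i ∈ S, d ≤ (i:ℕ) := by
    intro i hi
    rw [hS, Finset.mem_image] at hi
    obtain ⟨j, -, rfl⟩ := hi
    simp [hSemb]
  -- the inner product bound
  have hinner : ∀ (v : E n) (i : Fin n), d ≤ (i:ℕ) →
      |(inner ℝ (b i) v : ℝ)| ≤ ‖v - (Submodule.orthogonalProjectionOnto V v : E n)‖ := by
    intro v i hi
    set w : E n := v - (Submodule.orthogonalProjectionOnto V v : E n) with hw
    have hsplit : (inner ℝ (b i) v : ℝ) = inner ℝ (b i) w := by
      have : v = w + (Submodule.orthogonalProjectionOnto V v : E n) := by rw [hw]; abel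
      rw [this, inner_add_right, hw]
      have h0 : (inner ℝ (b i) ((Submodule.orthogonalProjectionOnto V v : E n)) : ℝ) = 0 := by
        rw [real_inner_comm]
        exact (Submodule.mem_orthogonal V (b i)).mp (hborth i hi) _ (SetLike.coe_mem _)
      rw [h0, add_zero]
    rw [hsplit]
    calc |(inner ℝ (b i) w : ℝ)| ≤ ‖b i‖ * ‖w‖ := abs_real_inner_le_norm _ _
      _ = ‖w‖ := by rw [b.orthonormal.1 i, one_mul]
  -- the 1-D factors
  set c' : Fin n → ℝ := fun i => b.repr c i with hc'
  set h1d : Fin n → ℝ → ℝ≥0∞ := fun i t =>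
    ENNReal.ofReal (Real.exp (-(c' i - t)^2/2)) *
      (if i ∈ S then ENNReal.ofReal |t| ^ (-q) else 1) with hh1d
  have hh1dmeas : ∀ i, Measurable (h1d i) := by
    intro i
    refine Measurable.mul (by fun_prop) ?_
    split_ifs
    · fun_prop
    · exact measurable_const
  -- pointwise bound
  have hpoint : ∀ v : E n,
      ENNReal.ofReal (Real.exp (-‖c - v‖^2/2)) *
        (if v ∈ V then 0
         else ENNReal.ofReal (‖v - (Submodule.orthogonalProjectionOnto V v : E n)‖ ^ (-β)))
      ≤ ∏ i : Fin n, h1d i (b.repr v i) := by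
    intro v
    have hnormsq : ‖c - v‖^2 = ∑ i : Fin n, (c' i - b.repr v i)^2 := by
      have h1 : ‖c - v‖ = ‖b.repr (c - v)‖ := (b.repr.norm_map _).symm
      rw [h1, EuclideanSpace.norm_eq, Real.sq_sqrt (by positivity)]
      refine Finset.sum_congr rfl fun i _ => ?_
      rw [map_sub]
      simp [Real.norm_eq_abs, sq_abs, hc']
    have hexp : ENNReal.ofReal (Real.exp (-‖c - v‖^2/2))
        = ∏ i : Fin n, ENNReal.ofReal (Real.exp (-(c' i - b.repr v i)^2/2)) := by
      rw [hnormsq, show -(∑ i : Fin n, (c' i - b.repr v i)^2)/2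
          = ∑ i : Fin n, (-(c' i - b.repr v i)^2/2) by
            rw [← Finset.sum_div, ← Finset.sum_neg_distrib],
        Real.exp_sum, ENNReal.ofReal_prod_of_nonneg (fun i _ => (Real.exp_pos _).le)]
    by_cases hvV : v ∈ V
    · simp only [if_pos hvV, mul_zero]
      exact zero_le
    · simp only [if_neg hvV]
      set w : E n := v - (Submodule.orthogonalProjectionOnto V v : E n) with hw
      have hwne : w ≠ 0 := by
        rw [hw, sub_ne_zero]
        intro h
        exact hvV ((Submodule.starProjection_eq_self_iff (K := V)).mp h.symm)
      have hwpos : 0 < ‖w‖ := norm_pos_iff.mpr hwne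
      have hsing : ENNReal.ofReal (‖w‖ ^ (-β))
          ≤ ∏ i : Fin n, (if i ∈ S then ENNReal.ofReal |b.repr v i| ^ (-q) else 1) := by
        have hprod1 : ∏ i : Fin n, (if i ∈ S then ENNReal.ofReal |b.repr v i| ^ (-q) else 1)
            = ∏ i ∈ S, ENNReal.ofReal |b.repr v i| ^ (-q) := by
          rw [Finset.prod_ite_mem, Finset.univ_inter]
        rw [hprod1]
        have hw1 : ENNReal.ofReal (‖w‖ ^ (-β)) = ENNReal.ofReal ‖w‖ ^ (-β) :=
          (ENNReal.ofReal_rpow_of_pos hwpos).symm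
        have hw2 : ENNReal.ofReal ‖w‖ ^ (-β) = ∏ _i ∈ S, ENNReal.ofReal ‖w‖ ^ (-q) := by
          rw [Finset.prod_const, hScard, ← ENNReal.rpow_natCast (ENNReal.ofReal ‖w‖ ^ (-q)) N,
            ← ENNReal.rpow_mul, show -q * N = -β by rw [← hqN]; ring]
        rw [hw1, hw2]
        refine Finset.prod_le_prod' fun i hi => ?_
        have hle : ENNReal.ofReal |b.repr v i| ≤ ENNReal.ofReal ‖w‖ := by
          refine ENNReal.ofReal_le_ofReal ?_
          rw [b.repr_apply_apply]
          exact hinner v i (hSd i hi)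
        rw [ENNReal.rpow_neg, ENNReal.rpow_neg]
        exact ENNReal.inv_le_inv.mpr (ENNReal.rpow_le_rpow hle hq0.le)
      calc ENNReal.ofReal (Real.exp (-‖c - v‖^2/2)) * ENNReal.ofReal (‖w‖ ^ (-β))
          ≤ (∏ i : Fin n, ENNReal.ofReal (Real.exp (-(c' i - b.repr v i)^2/2))) *
            ∏ i : Fin n, (if i ∈ S then ENNReal.ofReal |b.repr v i| ^ (-q) else 1) := by
            rw [hexp]
            exact mul_le_mul_right hsing _
        _ = ∏ i : Fin n, h1d i (b.repr v i) := by
            rw [← Finset.prod_mul_distrib]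
  -- integrate
  have hchange : ∫⁻ v : E n, ∏ i : Fin n, h1d i (b.repr v i)
      = ∏ i : Fin n, ∫⁻ t : ℝ, h1d i t := by
    have e1 := b.measurePreserving_repr.lintegral_comp_emb
      (b.repr.toHomeomorph.measurableEmbedding) (fun z : E n => ∏ i : Fin n, h1d i (z i))
    have e2 := (EuclideanSpace.volume_preserving_symm_measurableEquiv_toLp (Fin n)).lintegral_comp_emb
      (MeasurableEquiv.toLp 2 (Fin n → ℝ)).symm.measurableEmbedding
      (fun x : Fin n → ℝ => ∏ i : Fin n, h1d i (x i))
    rw [e1, ← lintegral_pi_prod h1d hh1dmeas, ← e2]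
    rfl
  calc ∫⁻ v : E n, ENNReal.ofReal (Real.exp (-‖c - v‖^2/2)) *
        (if v ∈ V then 0
         else ENNReal.ofReal (‖v - (Submodule.orthogonalProjectionOnto V v : E n)‖ ^ (-((n:ℝ) - m - 1))))
      ≤ ∫⁻ v : E n, ∏ i : Fin n, h1d i (b.repr v i) := lintegral_mono fun v => hpoint v
    _ = ∏ i : Fin n, ∫⁻ t : ℝ, h1d i t := hchange
    _ ≤ ∏ _i : Fin n, K := by
        refine Finset.prod_le_prod' fun i _ => ?_
        by_cases hiS : i ∈ S
        · simp only [hh1d, if_pos hiS]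
          exact oneD_sing_bound hq0 hq1 (c' i)
        · simp only [hh1d, if_neg hiS, mul_one]
          rw [lintegral_exp_shift]
          rw [hK]
          exact le_add_self
    _ = K ^ n := by rw [Finset.prod_const, Finset.card_univ, Fintype.card_fin]




/-- The density factor as a function of a tuple of columns. -/
def gd (n m : ℕ) {k : ℕ} (x : Fin k → E n) : ℝ≥0∞ :=
  if 0 < (gram x).det then
    ENNReal.ofReal ((gram x).det ^ (-(((n:ℝ) - m - 1) / 2))) else 0

lemma continuous_detGram {n k : ℕ} : Continuous fun x : Fin k → E n => (gram x).det := by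
  refine Continuous.matrix_det (continuous_matrix fun i j => ?_)
  show Continuous fun x : Fin k → E n => (inner ℝ (x i) (x j) : ℝ)
  exact Continuous.inner (continuous_apply i) (continuous_apply j)

lemma measurable_gd {n m k : ℕ} : Measurable (gd n m : (Fin k → E n) → ℝ≥0∞) := by
  unfold gd
  refine Measurable.ite ?_ ?_ measurable_const
  · exact measurableSet_lt measurable_const continuous_detGram.measurable
  · refine Measurable.ennreal_ofReal ?_
    have h : Measurable fun t : ℝ => t ^ (-(((n:ℝ) - m - 1) / 2)) := by fun_prop
    exact h.comp continuous_detGram.measurable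

lemma gd_cons {n m k : ℕ} (f : Fin k → E n) (v : E n) :
    gd n m (Fin.cons v f)
      = gd n m f * (if v ∈ Submodule.span ℝ (Set.range f) then 0
          else ENNReal.ofReal
            (‖v - (Submodule.orthogonalProjectionOnto (Submodule.span ℝ (Set.range f)) v : E n)‖
              ^ (-((n:ℝ) - m - 1)))) := by
  classical
  set V := Submodule.span ℝ (Set.range f) with hV
  set w : E n := v - (Submodule.orthogonalProjectionOnto V v : E n) with hw
  have hdet : (gram (Fin.cons v f)).det = ‖w‖^2 * (gram f).det := det_gram_cons f v
  have hD0 : 0 ≤ (gram f).det := det_gram_nonneg f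
  by_cases hv : v ∈ V
  · have hw0 : w = 0 := by
      rw [hw, sub_eq_zero, Submodule.coe_orthogonalProjectionOnto_apply,
        Submodule.starProjection_eq_self_iff.mpr hv]
    rw [if_pos hv, mul_zero]
    unfold gd
    rw [if_neg]
    rw [hdet, hw0]
    simp
  · have hwpos : 0 < ‖w‖ := by
      rw [norm_pos_iff, hw, sub_ne_zero]
      intro h
      exact hv ((Submodule.starProjection_eq_self_iff (K := V)).mp h.symm)
    rw [if_neg hv]
    by_cases hDpos : 0 < (gram f).det
    · have hdetpos : 0 < (gram (Fin.cons v f)).det := by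
        rw [hdet]; positivity
      unfold gd
      rw [if_pos hdetpos, if_pos hDpos, hdet,
        Real.mul_rpow (sq_nonneg _) hD0,
        ENNReal.ofReal_mul' (Real.rpow_nonneg hD0 _), mul_comm]
      congr 2
      rw [← Real.rpow_natCast ‖w‖ 2, ← Real.rpow_mul (norm_nonneg _)]
      congr 1
      push_cast
      ring
    · have hD00 : (gram f).det = 0 := le_antisymm (not_lt.mp hDpos) hD0
      unfold gd
      rw [if_neg hDpos, zero_mul, if_neg]
      rw [hdet, hD00, mul_zero]
      exact lt_irrefl 0

lemma measurable_cons_pair {n k : ℕ} :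
    Measurable fun p : E n × (Fin k → E n) => (Fin.cons p.1 p.2 : Fin (k+1) → E n) := by
  refine measurable_pi_lambda _ fun i => ?_
  refine Fin.cases ?_ (fun j => ?_) i
  · simpa using measurable_fst
  · simp only [Fin.cons_succ]
    exact (measurable_pi_apply j).comp measurable_snd



theorem mainInd (n m : ℕ) (hm : 1 ≤ m) (hnm : m + 2 ≤ n) :
    ∃ C : ℝ≥0∞, C ≠ ⊤ ∧ ∀ k, k ≤ m → ∀ y : Fin k → E n,
      (∫⁻ x : Fin k → E n,
        (∏ j, ENNReal.ofReal (Real.exp (-‖y j - x j‖^2/2))) * gd n m x) ≤ C ^ k := by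
  obtain ⟨C, hCtop, hC⟩ := lemA n m hm hnm
  refine ⟨C, hCtop, ?_⟩
  intro k
  induction k with
  | zero =>
      intro _ y
      have h1 : (fun x : Fin 0 → E n =>
          (∏ j, ENNReal.ofReal (Real.exp (-‖y j - x j‖^2/2))) * gd n m x)
          = fun _ => 1 := by
        funext x
        have hdet1 : (gram x).det = 1 := Matrix.det_fin_zero
        have hgd : gd n m x = 1 := by
          unfold gd
          rw [if_pos (by rw [hdet1]; norm_num), hdet1, Real.one_rpow, ENNReal.ofReal_one]
        rw [hgd]
        simp
      rw [h1, lintegral_one, pow_zero, volume_pi, Measure.pi_empty_univ]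
  | succ k ih =>
      intro hk y
      have hk' : k ≤ m := le_trans (Nat.le_succ k) hk
      have e := ((measurePreserving_piFinSuccAbove
          (fun _ : Fin (k+1) => (volume : Measure (E n))) 0).symm).lintegral_comp_emb
          ((MeasurableEquiv.piFinSuccAbove (fun _ => E n) 0).symm.measurableEmbedding)
          (fun x : Fin (k+1) → E n =>
            (∏ j, ENNReal.ofReal (Real.exp (-‖y j - x j‖^2/2))) * gd n m x)
      rw [volume_pi, ← e]
      simp_rw [MeasurableEquiv.piFinSuccAbove_symm_apply, Fin.insertNthEquiv,
        Equiv.coe_fn_mk, Fin.insertNth_zero]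
      simp only [Fin.zero_succAbove, cast_eq]
      -- now the integral is over the product space
      set P : (Fin k → E n) → ℝ≥0∞ := fun xs =>
        ∏ j : Fin k, ENNReal.ofReal (Real.exp (-‖y j.succ - xs j‖^2/2)) with hP
      have hmeas : Measurable (fun a : E n × (Fin k → E n) =>
          (∏ j : Fin (k+1), ENNReal.ofReal
            (Real.exp (-‖y j - (Fin.cons a.1 a.2 : Fin (k+1) → E n) j‖^2/2)))
            * gd n m (Fin.cons a.1 a.2)) := by
        have hc := measurable_cons_pair (n := n) (k := k)
        refine Measurable.mul ?_ (measurable_gd.comp hc)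
        refine Finset.measurable_prod _ fun j _ => ?_
        have hg : Continuous fun z : E n => ENNReal.ofReal (Real.exp (-‖y j - z‖^2/2)) :=
          ENNReal.continuous_ofReal.comp (by fun_prop)
        exact hg.measurable.comp ((measurable_pi_apply j).comp hc)
      rw [lintegral_prod_symm _ hmeas.aemeasurable]
      have hinner : ∀ xs : Fin k → E n,
          (∫⁻ v : E n, (∏ j : Fin (k+1), ENNReal.ofReal
              (Real.exp (-‖y j - (Fin.cons v xs : Fin (k+1) → E n) j‖^2/2)))
            * gd n m (Fin.cons v xs)) ≤ (P xs * gd n m xs) * C := by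
        intro xs
        have hPtop : P xs * gd n m xs ≠ ⊤ := by
          refine ENNReal.mul_ne_top ?_ ?_
          · exact ENNReal.prod_ne_top fun j _ => ENNReal.ofReal_ne_top
          · unfold gd
            split_ifs
            · exact ENNReal.ofReal_ne_top
            · exact zero_ne_top
        have hre : ∀ v : E n,
            (∏ j : Fin (k+1), ENNReal.ofReal
              (Real.exp (-‖y j - (Fin.cons v xs : Fin (k+1) → E n) j‖^2/2)))
              * gd n m (Fin.cons v xs)
            = (P xs * gd n m xs) *
              (ENNReal.ofReal (Real.exp (-‖y 0 - v‖^2/2)) *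
                (if v ∈ Submodule.span ℝ (Set.range xs) then 0
                 else ENNReal.ofReal
                   (‖v - (Submodule.orthogonalProjectionOnto (Submodule.span ℝ (Set.range xs)) v : E n)‖
                     ^ (-((n:ℝ) - m - 1))))) := by
          intro v
          rw [Fin.prod_univ_succ]
          simp only [Fin.cons_zero, Fin.cons_succ]
          rw [gd_cons xs v, hP]
          ring
        calc (∫⁻ v : E n, (∏ j : Fin (k+1), ENNReal.ofReal
              (Real.exp (-‖y j - (Fin.cons v xs : Fin (k+1) → E n) j‖^2/2)))
              * gd n m (Fin.cons v xs))
            = (P xs * gd n m xs) * ∫⁻ v : E n,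
                (ENNReal.ofReal (Real.exp (-‖y 0 - v‖^2/2)) *
                (if v ∈ Submodule.span ℝ (Set.range xs) then 0
                 else ENNReal.ofReal
                   (‖v - (Submodule.orthogonalProjectionOnto (Submodule.span ℝ (Set.range xs)) v : E n)‖
                     ^ (-((n:ℝ) - m - 1))))) := by
              rw [← lintegral_const_mul' _ _ hPtop]
              exact lintegral_congr hre
          _ ≤ (P xs * gd n m xs) * C := by
              refine mul_le_mul_right ?_ _
              refine hC (Submodule.span ℝ (Set.range xs)) ?_ (y 0)
              have h1 : finrank ℝ (Submodule.span ℝ (Set.range xs)) ≤ k := by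
                simpa [Set.finrank] using finrank_range_le_card xs
              omega
      calc (∫⁻ xs : Fin k → E n, ∫⁻ v : E n, (∏ j : Fin (k+1), ENNReal.ofReal
              (Real.exp (-‖y j - (Fin.cons v xs : Fin (k+1) → E n) j‖^2/2)))
              * gd n m (Fin.cons v xs) ∂volume ∂(Measure.pi fun _ => volume))
          ≤ ∫⁻ xs : Fin k → E n, (P xs * gd n m xs) * C ∂(Measure.pi fun _ => volume) :=
            lintegral_mono hinner
        _ = C * ∫⁻ xs : Fin k → E n, P xs * gd n m xs ∂(Measure.pi fun _ => volume) := by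
            simp_rw [mul_comm _ C]
            exact lintegral_const_mul' _ _ hCtop
        _ ≤ C * C ^ k := by
            refine mul_le_mul_right ?_ _
            have := ih hk' (fun j => y j.succ)
            rwa [volume_pi] at this
        _ = C ^ (k + 1) := by rw [pow_succ, mul_comm]

/-- currying as a measurable equivalence. -/
def curryEquiv (n m : ℕ) : (Fin m → Fin n → ℝ) ≃ᵐ (Fin n × Fin m → ℝ) where
  toFun f := fun p => f p.2 p.1
  invFun g := fun a i => g (i, a)
  left_inv f := rfl
  right_inv g := rfl
  measurable_toFun := measurable_pi_lambda _ fun p =>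
    (measurable_pi_apply p.1).comp (measurable_pi_apply p.2)
  measurable_invFun := measurable_pi_lambda _ fun a =>
    measurable_pi_lambda _ fun i => measurable_pi_apply (i, a)

lemma curry_mp (n m : ℕ) : MeasurePreserving (curryEquiv n m)
    (Measure.pi fun _ : Fin m => (volume : Measure (Fin n → ℝ)))
    (Measure.pi fun _ : Fin n × Fin m => (volume : Measure ℝ)) := by
  refine ⟨(curryEquiv n m).measurable, ?_⟩
  refine (Measure.pi_eq fun s hs => ?_).symm
  rw [MeasurableEquiv.map_apply]
  have hpre : (curryEquiv n m) ⁻¹' (Set.univ.pi s)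
      = Set.univ.pi (fun a : Fin m => Set.univ.pi fun i : Fin n => s (i, a)) := by
    ext f
    simp only [Set.mem_preimage, Set.mem_pi, Set.mem_univ, forall_true_left, Prod.forall]
    constructor
    · intro h a i; exact h i a
    · intro h i a; exact h a i
  rw [hpre, Measure.pi_pi]
  simp_rw [volume_pi_pi]
  rw [Fintype.prod_prod_type (fun p : Fin n × Fin m => volume (s p))]
  rw [Finset.prod_comm]

/-- The identification of matrix space with the tuple of columns. -/
def TEquiv (n m : ℕ) : (Fin m → E n) ≃ᵐ EuclideanSpace ℝ (Fin n × Fin m) :=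
  (MeasurableEquiv.piCongrRight fun _ : Fin m => (MeasurableEquiv.toLp 2 (Fin n → ℝ)).symm).trans
    ((curryEquiv n m).trans (MeasurableEquiv.toLp 2 (Fin n × Fin m → ℝ)).symm.symm)

lemma TEquiv_apply (n m : ℕ) (x : Fin m → E n) (p : Fin n × Fin m) :
    (TEquiv n m x : EuclideanSpace ℝ (Fin n × Fin m)) p = x p.2 p.1 := rfl

lemma TEquiv_mp (n m : ℕ) : MeasurePreserving (TEquiv n m)
    (volume : Measure (Fin m → E n)) (volume : Measure (EuclideanSpace ℝ (Fin n × Fin m))) := by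
  have h1 : MeasurePreserving
      (fun (x : Fin m → E n) (a : Fin m) => (MeasurableEquiv.toLp 2 (Fin n → ℝ)).symm (x a))
      (Measure.pi fun _ => volume) (Measure.pi fun _ => volume) :=
    measurePreserving_pi _ _ fun _ => EuclideanSpace.volume_preserving_symm_measurableEquiv_toLp (Fin n)
  have h2 := curry_mp n m
  have h3 := (EuclideanSpace.volume_preserving_symm_measurableEquiv_toLp (Fin n × Fin m)).symm
  have hcomp := (h3.comp h2).comp h1
  have : volume (α := Fin m → E n) = Measure.pi fun _ => volume := volume_pi
  rw [this]
  have hpi : (volume : Measure (Fin n × Fin m → ℝ)) = Measure.pi fun _ => volume := volume_pi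
  rw [hpi] at h3
  have hfin := (h3.comp h2).comp h1
  exact hfin

lemma matrix_eq_gram {n m : ℕ} (M : EuclideanSpace ℝ (Fin n × Fin m)) :
    (toMat M)ᵀ * toMat M = gram (fun a : Fin m => (WithLp.toLp 2 (fun i => M (i, a)) : E n)) := by
  ext a b
  rw [Matrix.mul_apply, gram_apply, PiLp.inner_apply]
  refine Finset.sum_congr rfl fun i _ => ?_
  simp [toMat, Matrix.transpose_apply, RCLike.inner_apply, conj_trivial, mul_comm]

lemma det_MtM_nonneg {n m : ℕ} (M : EuclideanSpace ℝ (Fin n × Fin m)) :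
    0 ≤ ((toMat M)ᵀ * toMat M).det := by
  rw [matrix_eq_gram]
  exact det_gram_nonneg _

lemma svs_eq_gd {n m : ℕ} (x : Fin m → E n) :
    ENNReal.ofReal (svsDensity n m (TEquiv n m x)) = gd n m x := by
  have hmat : (toMat (TEquiv n m x))ᵀ * toMat (TEquiv n m x) = gram x := by
    rw [matrix_eq_gram]
    congr 1
  unfold svsDensity gd
  rw [hmat]
  have hd0 : 0 ≤ (gram x).det := det_gram_nonneg x
  by_cases h : (gram x).det = 0
  · rw [if_neg (by rw [h]; exact fun hu => hu.ne_zero rfl), if_neg (by rw [h]; exact lt_irrefl 0)]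
    exact ENNReal.ofReal_zero
  · have hpos : 0 < (gram x).det := lt_of_le_of_ne hd0 (Ne.symm h)
    rw [if_pos (isUnit_iff_ne_zero.mpr h), if_pos hpos, neg_div]

lemma continuous_detMtM {n m : ℕ} :
    Continuous fun M : EuclideanSpace ℝ (Fin n × Fin m) => ((toMat M)ᵀ * toMat M).det := by
  have htm : Continuous fun M : EuclideanSpace ℝ (Fin n × Fin m) => toMat M := by
    refine continuous_matrix fun i a => ?_
    exact (continuous_apply (i, a)).comp (PiLp.continuous_ofLp (p := 2) (β := fun _ : Fin n × Fin m => ℝ))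
  exact Continuous.matrix_det ((htm.matrix_transpose).matrix_mul htm)

lemma measurable_svs {n m : ℕ} : Measurable (svsDensity n m) := by
  unfold svsDensity
  have hset : MeasurableSet {M : EuclideanSpace ℝ (Fin n × Fin m) |
      IsUnit ((toMat M)ᵀ * toMat M).det} := by
    have : {M : EuclideanSpace ℝ (Fin n × Fin m) | IsUnit ((toMat M)ᵀ * toMat M).det}
        = (fun M => ((toMat M)ᵀ * toMat M).det) ⁻¹' ({0}ᶜ) := by
      ext M
      simp [isUnit_iff_ne_zero]
    rw [this]
    exact continuous_detMtM.measurable (measurableSet_singleton 0).compl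
  refine Measurable.ite hset ?_ measurable_const
  have h : Measurable fun t : ℝ => t ^ (-(((n:ℝ) - m - 1)) / 2) := by fun_prop
  exact h.comp continuous_detMtM.measurable

end SVS

end

theorem stmt10 (n m : ℕ) (hm : 1 ≤ m) (hnm : m + 2 ≤ n)
    (Y : EuclideanSpace ℝ (Fin n × Fin m)) :
    0 < ∫⁻ M, ENNReal.ofReal
        ((2 * Real.pi) ^ (-((n : ℝ) * m) / 2) * Real.exp (-‖Y - M‖ ^ 2 / 2) *
          svsDensity n m M) ∧
    (∫⁻ M, ENNReal.ofReal
        ((2 * Real.pi) ^ (-((n : ℝ) * m) / 2) * Real.exp (-‖Y - M‖ ^ 2 / 2) *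
          svsDensity n m M)) < ⊤ := by
  classical
  set c0 : ℝ := (2 * Real.pi) ^ (-((n : ℝ) * m) / 2) with hc0
  have hc0pos : 0 < c0 := Real.rpow_pos_of_pos (by positivity) _
  set F : EuclideanSpace ℝ (Fin n × Fin m) → ℝ≥0∞ := fun M =>
    ENNReal.ofReal (c0 * Real.exp (-‖Y - M‖ ^ 2 / 2) * svsDensity n m M) with hF
  constructor
  · -- positivity
    have hFmeas : Measurable F := by
      refine Measurable.ennreal_ofReal ?_
      refine Measurable.mul (Measurable.mul measurable_const ?_) SVS.measurable_svs
      have hcont : Continuous fun M : EuclideanSpace ℝ (Fin n × Fin m) =>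
          Real.exp (-‖Y - M‖^2/2) := by fun_prop
      exact hcont.measurable
    rw [lintegral_pos_iff_support hFmeas]
    set U : Set (EuclideanSpace ℝ (Fin n × Fin m)) :=
      (fun M => ((toMat M)ᵀ * toMat M).det) ⁻¹' ({(0:ℝ)}ᶜ) with hU
    have hUopen : IsOpen U := isOpen_compl_singleton.preimage SVS.continuous_detMtM
    have hsub : U ⊆ Function.support F := by
      intro M hM
      have hMne : ((toMat M)ᵀ * toMat M).det ≠ 0 := hM
      have hdpos : 0 < ((toMat M)ᵀ * toMat M).det :=
        lt_of_le_of_ne (SVS.det_MtM_nonneg M) (Ne.symm hMne)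
      have hsvs : 0 < svsDensity n m M := by
        unfold svsDensity
        rw [if_pos (isUnit_iff_ne_zero.mpr hMne)]
        exact Real.rpow_pos_of_pos hdpos _
      have hpos : 0 < c0 * Real.exp (-‖Y - M‖^2/2) * svsDensity n m M := by positivity
      exact Function.mem_support.mpr (ENNReal.ofReal_pos.mpr hpos).ne'
    have hUne : U.Nonempty := by
      set M₀ : EuclideanSpace ℝ (Fin n × Fin m) :=
        (WithLp.equiv 2 _).symm
          (fun p : Fin n × Fin m => if (p.1:ℕ) = (p.2:ℕ) then (1:ℝ) else 0) with hM₀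
      have happ : ∀ p : Fin n × Fin m,
          M₀ p = if (p.1:ℕ) = (p.2:ℕ) then (1:ℝ) else 0 := fun p => rfl
      have hmat : (toMat M₀)ᵀ * toMat M₀ = (1 : Matrix (Fin m) (Fin m) ℝ) := by
        ext a b
        rw [Matrix.mul_apply]
        have ha : (a:ℕ) < n := lt_of_lt_of_le a.isLt (by omega)
        rw [Finset.sum_eq_single (⟨(a:ℕ), ha⟩ : Fin n)]
        · show toMat M₀ ⟨(a:ℕ), ha⟩ a * toMat M₀ ⟨(a:ℕ), ha⟩ b = _
          unfold toMat
          rw [happ, happ]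
          simp only [Matrix.one_apply, Fin.ext_iff]
          simp
        · intro i _ hi
          have hne : ¬ ((i:ℕ) = (a:ℕ)) := fun h => hi (Fin.ext h)
          show (toMat M₀)ᵀ a i * toMat M₀ i b = 0
          rw [Matrix.transpose_apply]
          unfold toMat
          rw [happ, if_neg hne, zero_mul]
        · simp
      refine ⟨M₀, ?_⟩
      show ((toMat M₀)ᵀ * toMat M₀).det ≠ 0
      rw [hmat, Matrix.det_one]
      exact one_ne_zero
    exact lt_of_lt_of_le (hUopen.measure_pos volume hUne) (measure_mono hsub)
  · -- finiteness
    obtain ⟨C, hCtop, hC⟩ := SVS.mainInd n m hm hnm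
    have hT := SVS.TEquiv_mp n m
    have htrans := hT.lintegral_comp_emb (SVS.TEquiv n m).measurableEmbedding F
    rw [← htrans]
    set yy : Fin m → SVS.E n := fun a => (WithLp.toLp 2 (fun i => Y (i, a)) : SVS.E n) with hyy
    have hnorm : ∀ x : Fin m → SVS.E n,
        ‖Y - SVS.TEquiv n m x‖^2 = ∑ a : Fin m, ‖yy a - x a‖^2 := by
      intro x
      have h1 : ‖Y - SVS.TEquiv n m x‖^2
          = ∑ p : Fin n × Fin m, (Y p - x p.2 p.1)^2 := by
        rw [EuclideanSpace.norm_eq, Real.sq_sqrt (by positivity)]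
        refine Finset.sum_congr rfl fun p _ => ?_
        rw [Real.norm_eq_abs, sq_abs]
        rfl
      rw [h1, Fintype.sum_prod_type, Finset.sum_comm]
      refine Finset.sum_congr rfl fun a _ => ?_
      rw [EuclideanSpace.norm_eq, Real.sq_sqrt (by positivity)]
      refine Finset.sum_congr rfl fun i _ => ?_
      rw [Real.norm_eq_abs, sq_abs]
      rfl
    have hFx : ∀ x : Fin m → SVS.E n, F (SVS.TEquiv n m x)
        = ENNReal.ofReal c0 *
          ((∏ a : Fin m, ENNReal.ofReal (Real.exp (-‖yy a - x a‖^2/2))) * SVS.gd n m x) := by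
      intro x
      simp only [hF]
      rw [ENNReal.ofReal_mul (mul_nonneg hc0pos.le (Real.exp_pos _).le),
        ENNReal.ofReal_mul hc0pos.le, SVS.svs_eq_gd x]
      have hexp : ENNReal.ofReal (Real.exp (-‖Y - SVS.TEquiv n m x‖^2/2))
          = ∏ a : Fin m, ENNReal.ofReal (Real.exp (-‖yy a - x a‖^2/2)) := by
        rw [hnorm x, show -(∑ a : Fin m, ‖yy a - x a‖^2)/2
            = ∑ a : Fin m, (-‖yy a - x a‖^2/2) by
              rw [← Finset.sum_div, ← Finset.sum_neg_distrib],
          Real.exp_sum, ENNReal.ofReal_prod_of_nonneg (fun a _ => (Real.exp_pos _).le)]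
      rw [hexp, mul_assoc]
    calc ∫⁻ x : Fin m → SVS.E n, F (SVS.TEquiv n m x)
        = ENNReal.ofReal c0 * ∫⁻ x : Fin m → SVS.E n,
            (∏ a : Fin m, ENNReal.ofReal (Real.exp (-‖yy a - x a‖^2/2))) * SVS.gd n m x := by
          rw [← lintegral_const_mul' _ _ ENNReal.ofReal_ne_top]
          exact lintegral_congr hFx
      _ ≤ ENNReal.ofReal c0 * C ^ m := mul_le_mul_right (hC m le_rfl yy) _
      _ < ⊤ := ENNReal.mul_lt_top ENNReal.ofReal_lt_top
          (ENNReal.pow_lt_top hCtop.lt_top)
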